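/- Let (G,𝒳,k) be a Yes-instance of EDP where G is a split graph with split partition (C, I), let 𝒫 be a minimum solution of (G,𝒳,k), let P ∈ 𝒫, and let v_1,…,v_ℓ be the vertices of V(P) ∩ C listed in the order in which they occur along P. Let e_i = v_i v_{i'} and e_j = v_j v_{j'} be two distinct edges with i < i', j < j', and i ≤ j, which are intersecting, i.e., j < i'. Then e_i and e_j are non-compatible: there is no single path P' ∈ 𝒫 \ {P} that contains both e_i and e_j. -/

import Mathlib

open SimpleGraph Finset

/-- A family of walks in `G` connecting the terminal pairs `X`. -/
abbrev WalkFamily {V : Type*} (G : SimpleGraph V) {ι : Type*} (X : ι → V × V) :=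
  ∀ i : ι, G.Walk (X i).1 (X i).2

/-- The walks in the family are pairwise edge-disjoint. -/
def PairwiseEdgeDisjoint {V : Type*} (G : SimpleGraph V) {ι : Type*} (X : ι → V × V)
    (P : WalkFamily G X) : Prop :=
  ∀ i j : ι, i ≠ j → ∀ e : Sym2 V, e ∈ (P i).edges → e ∉ (P j).edges

/-- A solution of the Edge-Disjoint Paths (EDP) instance `(G, X)`: a family of paths
connecting the terminal pairs that are pairwise edge-disjoint. -/
def IsEDPSolution {V : Type*} (G : SimpleGraph V) {ι : Type*} (X : ι → V × V)
    (P : WalkFamily G X) : Prop :=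
  (∀ i, (P i).IsPath) ∧ PairwiseEdgeDisjoint G X P

/-- `(G, X)` is a Yes-instance of EDP. -/
def EDPYes {V : Type*} (G : SimpleGraph V) {ι : Type*} (X : ι → V × V) : Prop :=
  ∃ P : WalkFamily G X, IsEDPSolution G X P

/-- A minimum solution of the EDP instance `(G, X)`: a solution minimizing the total
number of edges of the paths. -/
def IsMinEDPSolution {V : Type*} (G : SimpleGraph V) {ι : Type*} [Fintype ι]
    (X : ι → V × V) (P : WalkFamily G X) : Prop :=
  IsEDPSolution G X P ∧
    ∀ Q : WalkFamily G X, IsEDPSolution G X Q →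
      ∑ i, (P i).length ≤ ∑ i, (Q i).length

/-- `(C, I)` is a split partition of `G`: `V(G)` is the disjoint union of `C` and `I`,
`C` induces a clique, and `I` is an independent set. -/
def IsSplitPartition {V : Type*} (G : SimpleGraph V) (C I : Finset V) : Prop :=
  (∀ x : V, x ∈ C ∨ x ∈ I) ∧ (∀ x : V, ¬ (x ∈ C ∧ x ∈ I)) ∧
  (∀ x ∈ C, ∀ y ∈ C, x ≠ y → G.Adj x y) ∧ (∀ x ∈ I, ∀ y ∈ I, ¬ G.Adj x y)

section Aux

variable {V : Type*} {G : SimpleGraph V}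

/-- If a walk's support has a repetition, then its bypass is strictly shorter. -/
lemma bypass_length_lt_aux [DecidableEq V] {u v : V} (p : G.Walk u v)
    (h : ¬ p.support.Nodup) : p.bypass.length < p.length := by
  by_contra hlt
  push_neg at hlt
  exact h ((p.bypass_eq_self_of_length_le hlt) ▸ p.bypass_isPath).support_nodup

/-- Split a walk at an edge occurrence. -/
lemma split_at_edge_aux {s t : V} (Q : G.Walk s t) (c : Sym2 V) (hc : c ∈ Q.edges) :
    ∃ (u1 u2 : V) (A : G.Walk s u1) (B : G.Walk u2 t), c = Sym2.mk u1 u2 ∧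
      Q.edges = A.edges ++ c :: B.edges := by
  induction Q with
  | nil => simp at hc
  | cons h p ih =>
    rename_i a b d
    rw [SimpleGraph.Walk.edges_cons, List.mem_cons] at hc
    rcases hc with hc | hc
    · exact ⟨a, b, SimpleGraph.Walk.nil, p, hc, by simp [hc]⟩
    · obtain ⟨u1, u2, A, B, h1, h2⟩ := ih hc
      exact ⟨u1, u2, SimpleGraph.Walk.cons h A, B, h1, by simp [h2]⟩

lemma support_getElem_zero_aux {a b : V} (p : G.Walk a b) (h : 0 < p.support.length) :
    p.support[0]'h = a := by
  rw [List.getElem_zero]; exact p.head_support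

lemma mem_support_append_of_mem_aux {a b c : V} (W1 : G.Walk a b) (M : G.Walk b c) {z : V}
    (hz : z ∈ M.support) : z ∈ (W1.append M).support := by
  rw [Walk.mem_support_append_iff]
  rw [Walk.support_eq_cons M, List.mem_cons] at hz
  rcases hz with rfl | hz
  · exact Or.inl W1.end_mem_support
  · exact Or.inr (Walk.support_eq_cons M ▸ List.mem_cons_of_mem _ hz)

/-- Split a walk at two positions of its support (given in order), recording the
edge decomposition, the length decomposition, and the fact that all support vertices
with positions between the two given positions lie on the middle piece. -/
lemma split_three_aux {s t : V} (W : G.Walk s t) (a b : ℕ) (hab : a ≤ b)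
    (hb : b < W.support.length)
    (x y : V) (hx : W.support[a]'(by omega) = x) (hy : W.support[b]'hb = y) :
    ∃ (W1 : G.Walk s x) (M : G.Walk x y) (W2 : G.Walk y t),
      W.edges = W1.edges ++ (M.edges ++ W2.edges) ∧
      W.length = W1.length + (M.length + W2.length) ∧
      ∀ r (hr : r < W.support.length), a ≤ r → r ≤ b → W.support[r]'hr ∈ M.support := by
  induction W generalizing a b x y with
  | nil =>
    rename_i u
    simp only [Walk.support_nil, List.length_singleton] at hb
    have hb0 : b = 0 := by omega
    have ha0 : a = 0 := by omega
    subst hb0; subst ha0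
    simp only [Walk.support_nil, List.getElem_cons_zero] at hx hy
    subst hx; subst hy
    exact ⟨Walk.nil, Walk.nil, Walk.nil, by simp, by simp, by
      intro r hr h1 h2
      simp only [Walk.support_nil, List.length_singleton] at hr
      have : r = 0 := by omega
      subst this
      simp⟩
  | cons h p ih =>
    rename_i u v w
    simp only [Walk.support_cons, List.length_cons] at hb
    rcases Nat.eq_zero_or_eq_succ_pred b with hb0 | hbs
    · subst hb0
      have ha0 : a = 0 := by omega
      subst ha0
      simp only [Walk.support_cons, List.getElem_cons_zero] at hx hy
      subst hx; subst hy
      refine ⟨Walk.nil, Walk.nil, Walk.cons h p, by simp, by simp, ?_⟩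
      intro r hr h1 h2
      have : r = 0 := by omega
      subst this
      simp [Walk.support_cons]
    · obtain ⟨b', rfl⟩ : ∃ b', b = b' + 1 := ⟨b - 1, hbs⟩
      have hyb : p.support[b']'(by omega) = y := by
        simpa [Walk.support_cons] using hy
      rcases Nat.eq_zero_or_eq_succ_pred a with ha0 | has
      · subst ha0
        simp only [Walk.support_cons, List.getElem_cons_zero] at hx
        subst hx
        obtain ⟨W1', M', W2', he, hl, hs⟩ := ih 0 b' (Nat.zero_le _) (by omega) v y
          (support_getElem_zero_aux p _) hyb
        refine ⟨Walk.nil, Walk.cons h (W1'.append M'), W2', ?_, ?_, ?_⟩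
        · simp [he, Walk.edges_append]
        · simp [hl, Walk.length_append]; omega
        · intro r hr h1 h2
          rcases Nat.eq_zero_or_eq_succ_pred r with hr0 | hrs
          · subst hr0
            simp [Walk.support_cons]
          · obtain ⟨r', rfl⟩ : ∃ r', r = r' + 1 := ⟨r - 1, hrs⟩
            have hmem := hs r' (by simp only [Walk.support_cons, List.length_cons] at hr; omega)
              (Nat.zero_le _) (by omega)
            simp only [Walk.support_cons, List.getElem_cons_succ, List.mem_cons]
            exact Or.inr (mem_support_append_of_mem_aux W1' M' hmem)
      · obtain ⟨a', rfl⟩ : ∃ a', a = a' + 1 := ⟨a - 1, has⟩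
        have hxa : p.support[a']'(by omega) = x := by
          simpa [Walk.support_cons] using hx
        obtain ⟨W1', M', W2', he, hl, hs⟩ := ih a' b' (by omega) (by omega) x y hxa hyb
        refine ⟨Walk.cons h W1', M', W2', by simp [he], by simp [hl]; omega, ?_⟩
        intro r hr h1 h2
        obtain ⟨r', rfl⟩ : ∃ r', r = r' + 1 := ⟨r - 1, by omega⟩
        simp only [Walk.support_cons, List.getElem_cons_succ]
        exact hs r' (by simp only [Walk.support_cons, List.length_cons] at hr; omega)
          (by omega) (by omega)

end Aux

/-- With `L` the ordered list of clique vertices of a path `P i₀` of a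
minimum EDP solution on a split graph, two distinct intersecting edges `L[i] L[i']` and
`L[j] L[j']` (with `i < i'`, `j < j'`, `i ≤ j < i'`) are non-compatible: no single other
path of the solution contains both. -/
theorem min_edp_solution_intersecting_noncompatible {V : Type*} [Fintype V] [DecidableEq V]
    (G : SimpleGraph V)
    (C I : Finset V) (hsplit : IsSplitPartition G C I)
    {k : ℕ} (X : Fin k → V × V) (hX : ∀ i, (X i).1 ≠ (X i).2)
    (P : WalkFamily G X) (hP : IsMinEDPSolution G X P)
    (i₀ : Fin k)
    (L : List V) (hL : L = (P i₀).support.filter (fun y => decide (y ∈ C)))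
    (i i' j j' : ℕ) (hii' : i < i') (hjj' : j < j') (hij : i ≤ j)
    (hint : j < i') (hne : (i, i') ≠ (j, j'))
    (hi' : i' < L.length) (hj' : j' < L.length) :
    ¬ ∃ m : Fin k, m ≠ i₀ ∧
        Sym2.mk (L[i]'(by omega)) (L[i']'hi') ∈ (P m).edges ∧
        Sym2.mk (L[j]'(by omega)) (L[j']'hj') ∈ (P m).edges := by
  rintro ⟨m, hm, he, hf⟩
  have hWp : (P i₀).IsPath := hP.1.1 i₀
  have hQp : (P m).IsPath := hP.1.1 m
  have hdisj := hP.1.2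
  have hWQ : ∀ e ∈ (P i₀).edges, e ∉ (P m).edges := fun e h1 => hdisj i₀ m (Ne.symm hm) e h1
  have hLsub : List.Sublist L ((P i₀).support) := by rw [hL]; exact List.filter_sublist
  have hLnd : L.Nodup := hWp.support_nodup.sublist hLsub
  -- Step 1: find positions p < r < q in L such that s(L[p], L[q]) ∈ (P m).edges and some
  -- other edge d of P m contains L[r].
  obtain ⟨p, q, r, hpL, hqL, hrL, hprr, hrrq, hc, d, hd, hdc, hrd⟩ :
      ∃ p q r, ∃ (hpL : p < L.length) (hqL : q < L.length) (hrL : r < L.length),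
        p < r ∧ r < q ∧
        Sym2.mk (L[p]'hpL) (L[q]'hqL) ∈ (P m).edges ∧
        ∃ d ∈ (P m).edges, d ≠ Sym2.mk (L[p]'hpL) (L[q]'hqL) ∧ (L[r]'hrL) ∈ d := by
    rcases Nat.lt_or_ge i j with hij' | hij'
    · refine ⟨i, i', j, by omega, hi', by omega, hij', hint, he,
        Sym2.mk (L[j]'(by omega)) (L[j']'hj'), hf, ?_, Sym2.mem_mk_left _ _⟩
      intro hEq
      have hjm : (L[j]'(by omega)) ∈ Sym2.mk (L[i]'(by omega)) (L[i']'hi') :=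
        hEq ▸ Sym2.mem_mk_left _ _
      rcases Sym2.mem_iff.mp hjm with h' | h'
      · exact absurd (hLnd.getElem_inj_iff.mp h') (by omega)
      · exact absurd (hLnd.getElem_inj_iff.mp h') (by omega)
    · have hij2 : i = j := le_antisymm hij hij'
      subst hij2
      rcases Nat.lt_trichotomy i' j' with h1 | h1 | h1
      · refine ⟨i, j', i', by omega, hj', hi', hii', h1, hf,
          Sym2.mk (L[i]'(by omega)) (L[i']'hi'), he, ?_, Sym2.mem_mk_right _ _⟩
        intro hEq
        have him : (L[i']'hi') ∈ Sym2.mk (L[i]'(by omega)) (L[j']'hj') :=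
          hEq ▸ Sym2.mem_mk_right _ _
        rcases Sym2.mem_iff.mp him with h' | h'
        · exact absurd (hLnd.getElem_inj_iff.mp h') (by omega)
        · exact absurd (hLnd.getElem_inj_iff.mp h') (by omega)
      · exact absurd (by rw [h1]) hne
      · refine ⟨i, i', j', by omega, hi', hj', by omega, h1, he,
          Sym2.mk (L[i]'(by omega)) (L[j']'hj'), hf, ?_, Sym2.mem_mk_right _ _⟩
        intro hEq
        have him : (L[j']'hj') ∈ Sym2.mk (L[i]'(by omega)) (L[i']'hi') :=
          hEq ▸ Sym2.mem_mk_right _ _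
        rcases Sym2.mem_iff.mp him with h' | h'
        · exact absurd (hLnd.getElem_inj_iff.mp h') (by omega)
        · exact absurd (hLnd.getElem_inj_iff.mp h') (by omega)
  clear he hf hne hint hii' hjj' hij
  have hrp : L[r]'hrL ≠ L[p]'hpL := fun h => absurd (hLnd.getElem_inj_iff.mp h) (by omega)
  have hrq : L[r]'hrL ≠ L[q]'hqL := fun h => absurd (hLnd.getElem_inj_iff.mp h) (by omega)
  -- Step 2: split the walk P i₀ at the support positions of L[p] and L[q].
  obtain ⟨f, hfeq⟩ := List.sublist_iff_exists_fin_orderEmbedding_get_eq.mp hLsub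
  have hmono1 : f ⟨p, hpL⟩ < f ⟨r, hrL⟩ := f.strictMono (Fin.mk_lt_mk.mpr hprr)
  have hmono2 : f ⟨r, hrL⟩ < f ⟨q, hqL⟩ := f.strictMono (Fin.mk_lt_mk.mpr hrrq)
  obtain ⟨W1, M, W2, hWe, hWl, hWs⟩ := split_three_aux (P i₀)
    (f ⟨p, hpL⟩).val (f ⟨q, hqL⟩).val
    (le_of_lt (lt_trans hmono1 hmono2)) (f ⟨q, hqL⟩).isLt (L[p]'hpL) (L[q]'hqL)
    (by simpa using (hfeq ⟨p, hpL⟩).symm) (by simpa using (hfeq ⟨q, hqL⟩).symm)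
  have hyM : L[r]'hrL ∈ M.support := by
    have hmem := hWs (f ⟨r, hrL⟩).val (f ⟨r, hrL⟩).isLt (le_of_lt hmono1) (le_of_lt hmono2)
    have hget : (P i₀).support[(f ⟨r, hrL⟩).val]'(f ⟨r, hrL⟩).isLt = L[r]'hrL := by
      simpa using (hfeq ⟨r, hrL⟩).symm
    rwa [hget] at hmem
  -- Step 3: split the walk P m at the edge s(L[p], L[q]).
  obtain ⟨u1, u2, A, B, hc12, hQe⟩ := split_at_edge_aux (P m) _ hc
  have hadj : G.Adj (L[p]'hpL) (L[q]'hqL) := by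
    have := Walk.edges_subset_edgeSet (P m) hc
    rwa [SimpleGraph.mem_edgeSet] at this
  have hru : L[r]'hrL ≠ u1 ∧ L[r]'hrL ≠ u2 := by
    rcases Sym2.eq_iff.mp hc12 with ⟨h1, h2⟩ | ⟨h1, h2⟩
    · exact ⟨h1 ▸ hrp, h2 ▸ hrq⟩
    · exact ⟨h2 ▸ hrq, h1 ▸ hrp⟩
  obtain ⟨N, hNe, hNs, hNl⟩ : ∃ N : G.Walk u1 u2,
      (∀ e ∈ N.edges, e ∈ M.edges) ∧ (L[r]'hrL) ∈ N.support ∧ N.length = M.length := by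
    rcases Sym2.eq_iff.mp hc12 with ⟨h1, h2⟩ | ⟨h1, h2⟩
    · subst h1; subst h2; exact ⟨M, fun e h => h, hyM, rfl⟩
    · subst h1; subst h2
      exact ⟨M.reverse, fun e h => by simpa using h, by simpa using hyM, by simp⟩
  -- Step 4: the rerouted walks.
  set W' : G.Walk (X i₀).1 (X i₀).2 := W1.append (Walk.cons hadj W2) with hW'def
  set Q' : G.Walk (X m).1 (X m).2 := A.append (N.append B) with hQ'def
  have hW'len : W'.length = W1.length + (W2.length + 1) := by
    rw [hW'def, Walk.length_append, Walk.length_cons]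
  have hQ'len : Q'.length = A.length + (N.length + B.length) := by
    rw [hQ'def, Walk.length_append, Walk.length_append]
  have hQlen : (P m).length = A.length + (B.length + 1) := by
    have hlen := congrArg List.length hQe
    simp only [Walk.length_edges, List.length_append, List.length_cons] at hlen
    omega
  -- Q' has a repeated vertex, namely L[r].
  have hQ'nd : ¬ Q'.support.Nodup := by
    have hsup : Q'.support = A.support ++ (N.support.tail ++ B.support.tail) := by
      rw [hQ'def, Walk.support_append, Walk.support_append,
        List.tail_append_of_ne_nil (N.support_ne_nil)]
    have hrtail : L[r]'hrL ∈ N.support.tail := by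
      have hmem := hNs
      rw [Walk.support_eq_cons N, List.mem_cons] at hmem
      exact hmem.resolve_left hru.1
    obtain ⟨wd, rfl⟩ := Sym2.mem_iff_exists.mp hrd
    have hdAB : L[r]'hrL ∈ A.support ∨ L[r]'hrL ∈ B.support := by
      rw [hQe] at hd
      rcases List.mem_append.mp hd with h' | h'
      · exact Or.inl (A.fst_mem_support_of_mem_edges h')
      · rcases List.mem_cons.mp h' with h'' | h''
        · exact absurd h'' hdc
        · exact Or.inr (B.fst_mem_support_of_mem_edges h'')
    intro hnd
    rw [hsup, List.nodup_append] at hnd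
    obtain ⟨-, hnd2, hdisj'⟩ := hnd
    rcases hdAB with h' | h'
    · exact hdisj' _ h' _ (List.mem_append.mpr (Or.inl hrtail)) rfl
    · rw [List.nodup_append] at hnd2
      have hBtail : L[r]'hrL ∈ B.support.tail := by
        rw [Walk.support_eq_cons B, List.mem_cons] at h'
        exact h'.resolve_left hru.2
      exact hnd2.2.2 _ hrtail _ hBtail rfl
  -- edge membership facts
  have hW'edges : ∀ e ∈ W'.bypass.edges,
      e ∈ W1.edges ∨ e = Sym2.mk (L[p]'hpL) (L[q]'hqL) ∨ e ∈ W2.edges := by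
    intro e hmem
    have hmem' := Walk.edges_bypass_subset _ hmem
    rw [hW'def, Walk.edges_append, Walk.edges_cons] at hmem'
    rcases List.mem_append.mp hmem' with h' | h'
    · exact Or.inl h'
    · rcases List.mem_cons.mp h' with h'' | h''
      · exact Or.inr (Or.inl h'')
      · exact Or.inr (Or.inr h'')
  have hQ'edges : ∀ e ∈ Q'.bypass.edges, e ∈ A.edges ∨ e ∈ M.edges ∨ e ∈ B.edges := by
    intro e hmem
    have hmem' := Walk.edges_bypass_subset _ hmem
    rw [hQ'def, Walk.edges_append, Walk.edges_append] at hmem'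
    rcases List.mem_append.mp hmem' with h' | h'
    · exact Or.inl h'
    · rcases List.mem_append.mp h' with h'' | h''
      · exact Or.inr (Or.inl (hNe e h''))
      · exact Or.inr (Or.inr h'')
  -- disjointness facts from nodup edges
  have hWnd := hWp.isTrail.edges_nodup
  rw [hWe, List.nodup_append] at hWnd
  obtain ⟨-, hWnd2, hdisj1⟩ := hWnd
  have hdisj2 := (List.nodup_append.mp hWnd2).2.2
  have hQnd := hQp.isTrail.edges_nodup
  rw [hQe, List.nodup_append] at hQnd
  have hcA : Sym2.mk (L[p]'hpL) (L[q]'hqL) ∉ A.edges :=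
    fun h => hQnd.2.2 _ h _ List.mem_cons_self rfl
  have hcB : Sym2.mk (L[p]'hpL) (L[q]'hqL) ∉ B.edges := (List.nodup_cons.mp hQnd.2.1).1
  have hW1W : ∀ e ∈ W1.edges, e ∈ (P i₀).edges := fun e h => by
    rw [hWe]; exact List.mem_append.mpr (Or.inl h)
  have hMW : ∀ e ∈ M.edges, e ∈ (P i₀).edges := fun e h => by
    rw [hWe]; exact List.mem_append.mpr (Or.inr (List.mem_append.mpr (Or.inl h)))
  have hW2W : ∀ e ∈ W2.edges, e ∈ (P i₀).edges := fun e h => by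
    rw [hWe]; exact List.mem_append.mpr (Or.inr (List.mem_append.mpr (Or.inr h)))
  have hAQ : ∀ e ∈ A.edges, e ∈ (P m).edges := fun e h => by
    rw [hQe]; exact List.mem_append.mpr (Or.inl h)
  have hBQ : ∀ e ∈ B.edges, e ∈ (P m).edges := fun e h => by
    rw [hQe]; exact List.mem_append.mpr (Or.inr (List.mem_cons_of_mem _ h))
  have hcW : Sym2.mk (L[p]'hpL) (L[q]'hqL) ∉ (P i₀).edges := fun h => hWQ _ h hc
  -- the two rerouted walks are edge-disjoint
  have hRWQ : ∀ e, e ∈ W'.bypass.edges → e ∈ Q'.bypass.edges → False := by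
    intro e h1 h2
    rcases hW'edges e h1 with h1' | h1' | h1'
    · rcases hQ'edges e h2 with h2' | h2' | h2'
      · exact hWQ e (hW1W e h1') (hAQ e h2')
      · exact hdisj1 _ h1' _ (List.mem_append.mpr (Or.inl h2')) rfl
      · exact hWQ e (hW1W e h1') (hBQ e h2')
    · subst h1'
      rcases hQ'edges _ h2 with h2' | h2' | h2'
      · exact hcA h2'
      · exact hcW (hMW _ h2')
      · exact hcB h2'
    · rcases hQ'edges e h2 with h2' | h2' | h2'
      · exact hWQ e (hW2W e h1') (hAQ e h2')
      · exact hdisj2 _ h2' _ h1' rfl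
      · exact hWQ e (hW2W e h1') (hBQ e h2')
  -- the new solution
  set R : WalkFamily G X := Function.update (Function.update P m Q'.bypass) i₀ W'.bypass
    with hRdef
  have hRi : R i₀ = W'.bypass := Function.update_self _ _ _
  have hRm : R m = Q'.bypass := by
    rw [hRdef, Function.update_of_ne hm, Function.update_self]
  have hRo : ∀ n, n ≠ i₀ → n ≠ m → R n = P n := by
    intro n h1 h2
    rw [hRdef, Function.update_of_ne h1, Function.update_of_ne h2]
  have hsol : IsEDPSolution G X R := by
    constructor
    · intro n
      by_cases h1 : n = i₀
      · subst h1; rw [hRi]; exact W'.bypass_isPath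
      · by_cases h2 : n = m
        · subst h2; rw [hRm]; exact Q'.bypass_isPath
        · rw [hRo n h1 h2]; exact hP.1.1 n
    · intro n n' hnn' e hen hen'
      by_cases h1 : n = i₀
      · subst h1
        rw [hRi] at hen
        by_cases h2 : n' = m
        · subst h2; rw [hRm] at hen'; exact hRWQ e hen hen'
        · rw [hRo n' (Ne.symm hnn') h2] at hen'
          rcases hW'edges e hen with h' | h' | h'
          · exact hdisj n n' hnn' e (hW1W e h') hen'
          · subst h'
            exact hdisj m n' (Ne.symm h2) _ hc hen'
          · exact hdisj n n' hnn' e (hW2W e h') hen'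
      · by_cases h2 : n = m
        · subst h2
          rw [hRm] at hen
          by_cases h3 : n' = i₀
          · subst h3; rw [hRi] at hen'; exact hRWQ e hen' hen
          · rw [hRo n' h3 (Ne.symm hnn')] at hen'
            rcases hQ'edges e hen with h' | h' | h'
            · exact hdisj n n' hnn' e (hAQ e h') hen'
            · exact hdisj i₀ n' (Ne.symm h3) e (hMW e h') hen'
            · exact hdisj n n' hnn' e (hBQ e h') hen'
        · rw [hRo n h1 h2] at hen
          by_cases h3 : n' = i₀
          · subst h3
            rw [hRi] at hen'
            rcases hW'edges e hen' with h' | h' | h'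
            · exact hdisj n n' hnn' e hen (hW1W e h')
            · exact hdisj n m h2 e hen (h' ▸ hc)
            · exact hdisj n n' hnn' e hen (hW2W e h')
          · by_cases h4 : n' = m
            · subst h4
              rw [hRm] at hen'
              rcases hQ'edges e hen' with h' | h' | h'
              · exact hdisj n n' hnn' e hen (hAQ e h')
              · exact hdisj n i₀ h1 e hen (hMW e h')
              · exact hdisj n n' hnn' e hen (hBQ e h')
            · rw [hRo n' h3 h4] at hen'
              exact hdisj n n' hnn' e hen hen'
  -- the new solution is strictly shorter
  have hkey : W'.bypass.length + Q'.bypass.length < (P i₀).length + (P m).length := by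
    have h1 : W'.bypass.length ≤ W'.length := Walk.length_bypass_le _
    have h2 : Q'.bypass.length < Q'.length := bypass_length_lt_aux Q' hQ'nd
    omega
  have hsum : ∑ n, (R n).length < ∑ n, (P n).length := by
    have hfn : ∀ n, (R n).length =
        Function.update (Function.update (fun n => (P n).length) m Q'.bypass.length) i₀
          W'.bypass.length n := by
      intro n
      by_cases h1 : n = i₀
      · subst h1; rw [hRi, Function.update_self]
      · by_cases h2 : n = m
        · subst h2; rw [hRm, Function.update_of_ne hm, Function.update_self]
        · rw [hRo n h1 h2, Function.update_of_ne h1, Function.update_of_ne h2]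
    have hmmem : m ∈ Finset.univ \ ({i₀} : Finset (Fin k)) := by
      simp [hm]
    calc ∑ n, (R n).length
        = ∑ n, Function.update (Function.update (fun n => (P n).length) m Q'.bypass.length) i₀
            W'.bypass.length n := Finset.sum_congr rfl (fun n _ => hfn n)
      _ = W'.bypass.length + ∑ n ∈ Finset.univ \ {i₀},
            Function.update (fun n => (P n).length) m Q'.bypass.length n :=
          Finset.sum_update_of_mem (Finset.mem_univ _) _ _
      _ = W'.bypass.length + (Q'.bypass.length +
            ∑ n ∈ (Finset.univ \ {i₀}) \ {m}, (P n).length) := by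
          rw [Finset.sum_update_of_mem hmmem]
      _ < (P i₀).length + ((P m).length +
            ∑ n ∈ (Finset.univ \ {i₀}) \ {m}, (P n).length) := by omega
      _ = ∑ n, (P n).length := by
          rw [← Finset.sum_eq_add_sum_sdiff_singleton_of_mem hmmem (fun n => (P n).length),
            ← Finset.sum_eq_add_sum_sdiff_singleton_of_mem (Finset.mem_univ i₀) (fun n => (P n).length)]
  have := hP.2 R hsol
  omega
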